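/- Let C = 𝟙ₘuᵀ + v𝟙ₙᵀ + Σᵢ rᵢcᵢᵀ ∈ ℝ^{m×n} where the summand M = 𝟙ₘuᵀ + v𝟙ₙᵀ has rank 2. Then 𝟙ₘ lies in the column space of C and 𝟙ₙ lies in the column space of Cᵀ. Moreover, for every x with Cx = 𝟙ₘ one has 𝟙ₙᵀx = 0, and for every y with Cᵀy = 𝟙ₙ one has 𝟙ₘᵀy = 0. (Here it is assumed, as in the rank factorization, that the vectors 𝟙ₘ, v, and the rᵢ are linearly independent, and 𝟙ₙ, u, and the cᵢ are linearly independent.) -/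

import Mathlib

open Matrix

private lemma mulVec_vecMulVec' {m n : ℕ} (w : Fin m → ℝ) (u : Fin n → ℝ) (x : Fin n → ℝ) :
    (Matrix.vecMulVec w u).mulVec x = (u ⬝ᵥ x) • w := by
  funext j
  simp [Matrix.mulVec, Matrix.vecMulVec_apply, dotProduct, Finset.mul_sum, mul_comm, mul_assoc, mul_left_comm]

private lemma surj_of_li {N n : ℕ} (f : Fin N → Fin n → ℝ)
    (hf : LinearIndependent ℝ f) (t : Fin N → ℝ) :
    ∃ x : Fin n → ℝ, ∀ i, f i ⬝ᵥ x = t i := by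
  set F : Matrix (Fin N) (Fin n) ℝ := Matrix.of f with hF
  have hrank : F.rank = N := by
    rw [← Matrix.rank_transpose, Matrix.rank, Matrix.range_mulVecLin]
    exact (finrank_span_eq_card hf).trans (Fintype.card_fin N)
  have htop : LinearMap.range F.mulVecLin = ⊤ := by
    apply Submodule.eq_top_of_finrank_eq
    rw [← Matrix.rank, hrank, Module.finrank_pi]
    simp
  have hsurj : Function.Surjective F.mulVecLin := LinearMap.range_eq_top.mp htop
  obtain ⟨x, hx⟩ := hsurj t
  exact ⟨x, fun i => congrFun hx i⟩

private lemma key {m n k : ℕ} (u : Fin n → ℝ) (v : Fin m → ℝ)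
    (r : Fin k → Fin m → ℝ) (c : Fin k → Fin n → ℝ)
    (hcols : LinearIndependent ℝ (Fin.cons (1 : Fin m → ℝ) (Fin.cons v r)))
    (hrows : LinearIndependent ℝ (Fin.cons (1 : Fin n → ℝ) (Fin.cons u c))) :
    (∃ x : Fin n → ℝ,
      (Matrix.vecMulVec (1 : Fin m → ℝ) u + Matrix.vecMulVec v (1 : Fin n → ℝ)
        + ∑ i : Fin k, Matrix.vecMulVec (r i) (c i)).mulVec x = 1) ∧
    (∀ x : Fin n → ℝ,
      (Matrix.vecMulVec (1 : Fin m → ℝ) u + Matrix.vecMulVec v (1 : Fin n → ℝ)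
        + ∑ i : Fin k, Matrix.vecMulVec (r i) (c i)).mulVec x = 1 →
      (1 : Fin n → ℝ) ⬝ᵥ x = 0) := by
  set C := Matrix.vecMulVec (1 : Fin m → ℝ) u + Matrix.vecMulVec v (1 : Fin n → ℝ)
        + ∑ i : Fin k, Matrix.vecMulVec (r i) (c i) with hCdef
  have hmul : ∀ x : Fin n → ℝ, C.mulVec x =
      (u ⬝ᵥ x) • (1 : Fin m → ℝ) + ((1 : Fin n → ℝ) ⬝ᵥ x) • v
        + ∑ i : Fin k, (c i ⬝ᵥ x) • r i := by
    intro x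
    rw [hCdef, Matrix.add_mulVec, Matrix.add_mulVec, mulVec_vecMulVec', mulVec_vecMulVec']
    congr 1
    funext j
    simp only [Matrix.mulVec, Finset.sum_apply, dotProduct, Matrix.sum_apply,
      Matrix.vecMulVec_apply, Finset.sum_mul, Pi.smul_apply, smul_eq_mul, Finset.mul_sum]
    rw [Finset.sum_comm]
    exact Finset.sum_congr rfl fun i _ => Finset.sum_congr rfl fun l _ => by ring
  constructor
  · -- existence
    obtain ⟨x, hx⟩ := surj_of_li _ hrows (Pi.single 1 1)
    refine ⟨x, ?_⟩
    have h0 : (1 : Fin n → ℝ) ⬝ᵥ x = 0 := by simpa using hx 0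
    have h1 : u ⬝ᵥ x = 1 := by simpa using hx 1
    have h2 : ∀ i : Fin k, c i ⬝ᵥ x = 0 := fun i => by
      simpa [Fin.cons_succ, Pi.single_apply, Fin.succ_ne_zero, Fin.ext_iff] using hx i.succ.succ
    rw [hmul x, h0, h1]
    simp [h2]
  · -- uniqueness of coefficients
    intro x hx
    rw [hmul x] at hx
    set a : Fin (k + 2) → ℝ :=
      Fin.cons (u ⬝ᵥ x - 1)
        (Fin.cons ((1 : Fin n → ℝ) ⬝ᵥ x) (fun i => c i ⬝ᵥ x) : Fin (k + 1) → ℝ) with ha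
    have hsum : ∑ i, a i • (Fin.cons (1 : Fin m → ℝ) (Fin.cons v r) : Fin (k + 2) → Fin m → ℝ) i
        = (0 : Fin m → ℝ) := by
      rw [Fin.sum_univ_succ, Fin.sum_univ_succ]
      simp only [Fin.cons_zero, Fin.cons_succ, ha]
      have : (u ⬝ᵥ x - 1) • (1 : Fin m → ℝ) =
          (u ⬝ᵥ x) • (1 : Fin m → ℝ) - (1 : Fin m → ℝ) := by
        rw [sub_smul, one_smul]
      rw [this]
      have := hx
      abel_nf
      abel_nf at this
      linear_combination (norm := abel) this
    have := Fintype.linearIndependent_iff.mp hcols a hsum 1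
    simpa [ha] using this

theorem stmt6 {m n k : ℕ}
    (u : Fin n → ℝ) (v : Fin m → ℝ)
    (r : Fin k → Fin m → ℝ) (c : Fin k → Fin n → ℝ)
    (C : Matrix (Fin m) (Fin n) ℝ)
    (hC : C = Matrix.vecMulVec (1 : Fin m → ℝ) u + Matrix.vecMulVec v (1 : Fin n → ℝ)
      + ∑ i : Fin k, Matrix.vecMulVec (r i) (c i))
    (hMrank : (Matrix.vecMulVec (1 : Fin m → ℝ) u
      + Matrix.vecMulVec v (1 : Fin n → ℝ)).rank = 2)
    (hcols : LinearIndependent ℝ (Fin.cons (1 : Fin m → ℝ) (Fin.cons v r)))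
    (hrows : LinearIndependent ℝ (Fin.cons (1 : Fin n → ℝ) (Fin.cons u c))) :
    (∃ x : Fin n → ℝ, C.mulVec x = 1) ∧
    (∃ y : Fin m → ℝ, C.vecMul y = 1) ∧
    (∀ x : Fin n → ℝ, C.mulVec x = 1 → (1 : Fin n → ℝ) ⬝ᵥ x = 0) ∧
    (∀ y : Fin m → ℝ, C.vecMul y = 1 → (1 : Fin m → ℝ) ⬝ᵥ y = 0) := by
  subst hC
  obtain ⟨hex, huniq⟩ := key u v r c hcols hrows
  obtain ⟨hex', huniq'⟩ := key v u c r hrows hcols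
  have htrans : ∀ y : Fin m → ℝ,
      (Matrix.vecMulVec (1 : Fin m → ℝ) u + Matrix.vecMulVec v (1 : Fin n → ℝ)
        + ∑ i : Fin k, Matrix.vecMulVec (r i) (c i)).vecMul y =
      (Matrix.vecMulVec (1 : Fin n → ℝ) v + Matrix.vecMulVec u (1 : Fin m → ℝ)
        + ∑ i : Fin k, Matrix.vecMulVec (c i) (r i)).mulVec y := by
    have hT : (Matrix.vecMulVec (1 : Fin m → ℝ) u + Matrix.vecMulVec v (1 : Fin n → ℝ)
        + ∑ i : Fin k, Matrix.vecMulVec (r i) (c i))ᵀ =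
        Matrix.vecMulVec (1 : Fin n → ℝ) v + Matrix.vecMulVec u (1 : Fin m → ℝ)
        + ∑ i : Fin k, Matrix.vecMulVec (c i) (r i) := by
      funext i j
      simp only [Matrix.transpose_apply, Matrix.add_apply, Matrix.sum_apply,
        Matrix.vecMulVec_apply, Pi.one_apply]
      have hs : ∑ l : Fin k, c l i * r l j = ∑ l : Fin k, r l j * c l i :=
        Finset.sum_congr rfl fun l _ => mul_comm _ _
      rw [hs]
      ring
    intro y
    rw [← Matrix.mulVec_transpose, hT]
  refine ⟨hex, ?_, huniq, ?_⟩
  · obtain ⟨y, hy⟩ := hex'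
    exact ⟨y, by rw [htrans y]; exact hy⟩
  · intro y hy
    exact huniq' y (by rw [← htrans y]; exact hy)
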